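/- Let (R,m) be a Noetherian local ring, I a proper ideal, x ∈ R, and n₀ ≥ 1. If x^{n₀} lies in the integral closure of m·I^{n₀}, then x^n lies in the integral closure of m·I^n for every n ≥ n₀. -/

import Mathlib

/-- The integral closure `J̄` of an ideal `J`: elements `x` satisfying an equation
`x ^ k + a 1 * x ^ (k-1) + ⋯ + a k = 0` with `a i ∈ J ^ i`. -/
def intCl {R : Type*} [CommRing R] (J : Ideal R) : Set R :=
  {x | ∃ k : ℕ, 0 < k ∧ ∃ a : ℕ → R, (∀ i, 1 ≤ i → i ≤ k → a i ∈ J ^ i) ∧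
    x ^ k + ∑ i ∈ Finset.Icc 1 k, a i * x ^ (k - i) = 0}

/-- The special part of the integral closure of an ideal `I` of a local ring `(R,m)`:
`I^{-sp} = {x | x ^ n ∈ (m * I ^ n)‾ for some n ≥ 1}`. -/
def spIntCl {R : Type*} [CommRing R] [IsLocalRing R] (I : Ideal R) : Set R :=
  {x | ∃ n : ℕ, 1 ≤ n ∧ x ^ n ∈ intCl (IsLocalRing.maximalIdeal R * I ^ n)}

section Aux

variable {R : Type*} [CommRing R]

/-- The ideal `∑_{s=1}^k L^s · (w^{k-s})`: `w ∈ J̄` iff `w^k` lies in this ideal for some `k`. -/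
def TId (L : Ideal R) (w : R) (k : ℕ) : Ideal R :=
  ∑ s ∈ Finset.Icc 1 k, L ^ s * Ideal.span {w ^ (k - s)}

/-- The ideal `(J + (y))^{k-1} = ∑_{s=0}^{k-1} J^s (y^{k-1-s})` used in the determinant trick. -/
def MId (J : Ideal R) (y : R) (k : ℕ) : Ideal R :=
  ∑ s ∈ Finset.range k, J ^ s * Ideal.span {y ^ (k - 1 - s)}

/-- `a ≡ w^p` modulo `TId L w p`. -/
def CosetRel (L : Ideal R) (w : R) (p : ℕ) (a : R) : Prop := a - w ^ p ∈ TId L w p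

theorem sum_ideal_le {ι : Type*} {t : Finset ι} {F : ι → Ideal R} {K : Ideal R}
    (h : ∀ i ∈ t, F i ≤ K) : ∑ i ∈ t, F i ≤ K := by
  classical
  induction t using Finset.cons_induction with
  | empty => simp
  | cons a t ha ih =>
    rw [Finset.sum_cons, Submodule.add_eq_sup]
    exact sup_le (h a (Finset.mem_cons_self a t)) (ih fun i hi => h i (Finset.mem_cons_of_mem hi))

theorem single_TId_le {L : Ideal R} {w : R} {k s : ℕ} (hs : s ∈ Finset.Icc 1 k) :
    L ^ s * Ideal.span {w ^ (k - s)} ≤ TId L w k :=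
  Finset.single_le_sum (f := fun s => L ^ s * Ideal.span {w ^ (k - s)}) (fun _ _ => bot_le) hs

theorem mem_TId_of {L : Ideal R} {w : R} {k s : ℕ} (hs : s ∈ Finset.Icc 1 k)
    {c : R} (hc : c ∈ L ^ s) : c * w ^ (k - s) ∈ TId L w k :=
  single_TId_le hs (Ideal.mul_mem_mul hc (Ideal.mem_span_singleton_self _))

theorem TId_mul_TId (L : Ideal R) (w : R) (p q : ℕ) :
    TId L w p * TId L w q ≤ TId L w (p + q) := by
  rw [TId, TId, Finset.sum_mul_sum]
  apply sum_ideal_le; intro s hs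
  apply sum_ideal_le; intro t ht
  simp only [Finset.mem_Icc] at hs ht
  have : L ^ s * Ideal.span {w ^ (p - s)} * (L ^ t * Ideal.span {w ^ (q - t)})
      = L ^ (s + t) * Ideal.span {w ^ (p + q - (s + t))} := by
    have harith : p - s + (q - t) = p + q - (s + t) := by omega
    rw [mul_mul_mul_comm, ← pow_add, Ideal.span_singleton_mul_span_singleton, ← pow_add, harith]
  rw [this]
  exact single_TId_le (Finset.mem_Icc.mpr ⟨by omega, by omega⟩)

theorem pow_mul_TId (L : Ideal R) (w : R) (p q : ℕ) :
    Ideal.span {w ^ p} * TId L w q ≤ TId L w (p + q) := by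
  rw [TId, Finset.mul_sum]
  apply sum_ideal_le; intro s hs
  simp only [Finset.mem_Icc] at hs
  have : Ideal.span {w ^ p} * (L ^ s * Ideal.span {w ^ (q - s)})
      = L ^ s * Ideal.span {w ^ (p + q - s)} := by
    have harith : p + (q - s) = p + q - s := by omega
    rw [mul_left_comm, Ideal.span_singleton_mul_span_singleton, ← pow_add, harith]
  rw [this]
  exact single_TId_le (Finset.mem_Icc.mpr ⟨by omega, by omega⟩)

theorem mem_sum_ideal {ι : Type*} {t : Finset ι} {F : ι → Ideal R} {v : R}
    (h : v ∈ ∑ i ∈ t, F i) : ∃ g : ι → R, (∀ i ∈ t, g i ∈ F i) ∧ v = ∑ i ∈ t, g i := by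
  classical
  induction t using Finset.cons_induction generalizing v with
  | empty => exact ⟨0, by simp, by simpa using h⟩
  | cons a t ha ih =>
    rw [Finset.sum_cons, Submodule.add_eq_sup] at h
    obtain ⟨y, hy, z, hz, hyz⟩ := Submodule.mem_sup.mp h
    obtain ⟨g, hg, hgz⟩ := ih hz
    refine ⟨Function.update g a y, ?_, ?_⟩
    · intro i hi
      by_cases hia : i = a
      · subst hia; simpa using hy
      · rw [Function.update_of_ne hia]
        exact hg i ((Finset.mem_cons.mp hi).resolve_left hia)
    · rw [Finset.sum_cons, Function.update_self, ← hyz]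
      congr 1
      rw [hgz]
      exact Finset.sum_congr rfl fun i hi =>
        (Function.update_of_ne (by rintro rfl; exact ha hi) _ _).symm

theorem cosetRel_mul {L : Ideal R} {w : R} {p q : ℕ} {a b : R}
    (ha : CosetRel L w p a) (hb : CosetRel L w q b) : CosetRel L w (p + q) (a * b) := by
  have key : a * b - w ^ (p + q)
      = (a - w ^ p) * (b - w ^ q) + w ^ p * (b - w ^ q) + w ^ q * (a - w ^ p) := by
    rw [pow_add]; ring
  unfold CosetRel at *
  rw [key]
  refine add_mem (add_mem ?_ ?_) ?_
  · exact TId_mul_TId L w p q (Ideal.mul_mem_mul ha hb)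
  · exact pow_mul_TId L w p q (Ideal.mul_mem_mul (Ideal.mem_span_singleton_self _) hb)
  · have := pow_mul_TId L w q p (Ideal.mul_mem_mul (Ideal.mem_span_singleton_self (w ^ q)) ha)
    rwa [add_comm q p] at this

theorem cosetRel_pow {L : Ideal R} {w : R} {p : ℕ} {a : R}
    (ha : CosetRel L w p a) : ∀ K : ℕ, CosetRel L w (K * p) (a ^ K) := by
  intro K
  induction K with
  | zero => simp [CosetRel, TId]
  | succ K ih =>
    have := cosetRel_mul ih ha
    rwa [← pow_succ, ← Nat.succ_mul] at this

theorem mem_intCl_iff {L : Ideal R} {w : R} :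
    w ∈ intCl L ↔ ∃ k : ℕ, 0 < k ∧ w ^ k ∈ TId L w k := by
  constructor
  · rintro ⟨k, hk, a, ha, heq⟩
    refine ⟨k, hk, ?_⟩
    have : w ^ k = -∑ i ∈ Finset.Icc 1 k, a i * w ^ (k - i) :=
      eq_neg_of_add_eq_zero_left heq
    rw [this]
    refine neg_mem (sum_mem fun i hi => ?_)
    exact mem_TId_of hi (ha i (Finset.mem_Icc.mp hi).1 (Finset.mem_Icc.mp hi).2)
  · rintro ⟨k, hk, hmem⟩
    obtain ⟨g, hg, hv⟩ := mem_sum_ideal hmem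
    have hb : ∀ s : ℕ, ∃ b : R, b ∈ L ^ s ∧ (s ∈ Finset.Icc 1 k → b * w ^ (k - s) = g s) := by
      intro s
      by_cases hs : s ∈ Finset.Icc 1 k
      · obtain ⟨b, hbL, hbe⟩ := Ideal.mem_mul_span_singleton.mp (hg s hs)
        exact ⟨b, hbL, fun _ => hbe⟩
      · exact ⟨0, zero_mem _, fun h => absurd h hs⟩
    choose b hbL hbe using hb
    refine ⟨k, hk, fun i => -(b i), fun i _ _ => neg_mem (hbL i), ?_⟩
    have h1 : ∑ i ∈ Finset.Icc 1 k, -b i * w ^ (k - i)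
        = -∑ i ∈ Finset.Icc 1 k, b i * w ^ (k - i) := by
      simp [neg_mul]
    have h2 : ∑ i ∈ Finset.Icc 1 k, b i * w ^ (k - i) = w ^ k := by
      rw [hv]; exact Finset.sum_congr rfl hbe
    rw [h1, h2, add_neg_cancel]

theorem intCl_mono {J J' : Ideal R} (hJ : J ≤ J') : intCl J ⊆ intCl J' := by
  rintro x ⟨k, hk, a, ha, heq⟩
  exact ⟨k, hk, a, fun i h1 h2 => Ideal.pow_right_mono hJ i (ha i h1 h2), heq⟩

theorem mem_intCl_of_pow_mem {J : Ideal R} {x : R} {m : ℕ} (hm : 0 < m)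
    (h : x ^ m ∈ intCl (J ^ m)) : x ∈ intCl J := by
  obtain ⟨k, hk, hmem⟩ := mem_intCl_iff.mp h
  refine mem_intCl_iff.mpr ⟨m * k, by positivity, ?_⟩
  have hle : TId (J ^ m) (x ^ m) k ≤ TId J x (m * k) := by
    apply sum_ideal_le; intro s hs
    rw [Finset.mem_Icc] at hs
    rw [← pow_mul, ← pow_mul]
    have : m * (k - s) = m * k - m * s := Nat.mul_sub m k s
    rw [this]
    exact single_TId_le (Finset.mem_Icc.mpr
      ⟨Nat.mul_pos hm hs.1, Nat.mul_le_mul_left m hs.2⟩)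
  have h2 := hle hmem
  rwa [← pow_mul] at h2

theorem TId_le_mul_MId {J : Ideal R} {y : R} {k : ℕ} :
    TId J y k ≤ J * MId J y k := by
  apply sum_ideal_le
  intro s hs
  rw [Finset.mem_Icc] at hs
  obtain ⟨t, rfl⟩ : ∃ t, s = t + 1 := ⟨s - 1, by omega⟩
  have h1 : k - (t + 1) = k - 1 - t := by omega
  rw [pow_succ', h1, mul_assoc]
  exact Ideal.mul_mono_right (Finset.single_le_sum
    (f := fun s => J ^ s * Ideal.span {y ^ (k - 1 - s)}) (fun _ _ => bot_le)
    (Finset.mem_range.mpr (by omega)))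

theorem pow_mem_MId {J : Ideal R} {y : R} {k : ℕ} (hk : 0 < k) :
    y ^ (k - 1) ∈ MId J y k := by
  have h1 : y ^ (k - 1) ∈ J ^ 0 * Ideal.span {y ^ (k - 1 - 0)} := by
    rw [pow_zero, Ideal.one_eq_top, Ideal.top_mul, Nat.sub_zero]
    exact Ideal.mem_span_singleton_self _
  exact Finset.single_le_sum (f := fun s => J ^ s * Ideal.span {y ^ (k - 1 - s)})
    (fun _ _ => bot_le) (Finset.mem_range.mpr hk) h1

theorem span_mul_MId_le {J : Ideal R} {y : R} {k : ℕ} (hk : 0 < k)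
    (hyk : y ^ k ∈ TId J y k) :
    Ideal.span {y} * MId J y k ≤ J * MId J y k := by
  rw [MId, Finset.mul_sum]
  apply sum_ideal_le
  intro s hs
  rw [Finset.mem_range] at hs
  have key : Ideal.span {y} * (J ^ s * Ideal.span {y ^ (k - 1 - s)})
      = J ^ s * Ideal.span {y ^ (k - s)} := by
    rw [mul_left_comm, Ideal.span_singleton_mul_span_singleton, ← pow_succ']
    have : k - 1 - s + 1 = k - s := by omega
    rw [this]
  rw [key]
  rcases Nat.eq_zero_or_pos s with rfl | hs1
  · rw [pow_zero, Ideal.one_eq_top, Ideal.top_mul, Nat.sub_zero,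
      Ideal.span_singleton_le_iff_mem]
    exact TId_le_mul_MId hyk
  · exact le_trans (single_TId_le (Finset.mem_Icc.mpr ⟨hs1, by omega⟩)) TId_le_mul_MId

/-- Multiplicativity of the integral closure of ideals (via the determinant trick). -/
theorem mul_mem_intCl [IsNoetherianRing R] {J J' : Ideal R} {y z : R}
    (hy : y ∈ intCl J) (hz : z ∈ intCl J') : y * z ∈ intCl (J * J') := by
  obtain ⟨k, hk, hyk⟩ := mem_intCl_iff.mp hy
  obtain ⟨k', hk', hzk⟩ := mem_intCl_iff.mp hz
  set M := MId J y k with hM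
  set N := MId J' z k' with hN
  set P := M * N with hPdef
  set c := y * z with hc
  have hspan : Ideal.span {c} * P ≤ (J * J') * P := by
    have h1 : Ideal.span {c} * P = (Ideal.span {y} * M) * (Ideal.span {z} * N) := by
      rw [hc, ← Ideal.span_singleton_mul_span_singleton, hPdef]; ring
    rw [h1]
    calc (Ideal.span {y} * M) * (Ideal.span {z} * N) ≤ (J * M) * (J' * N) :=
          Ideal.mul_mono (span_mul_MId_le hk hyk) (span_mul_MId_le hk' hzk)
      _ = (J * J') * P := by rw [hPdef]; ring
  haveI : Module.Finite R ↥P := Module.Finite.iff_fg.mpr (IsNoetherian.noetherian P)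
  have hrange : LinearMap.range (algebraMap R (Module.End R ↥P) c) ≤ (J * J') • ⊤ := by
    rintro v ⟨u, rfl⟩
    rw [Module.algebraMap_end_apply, Submodule.mem_smul_top_iff, Ideal.smul_eq_mul]
    have : (↑(c • u) : R) = c * ↑u := rfl
    rw [this]
    exact hspan (Ideal.mul_mem_mul (Ideal.mem_span_singleton_self c) u.2)
  obtain ⟨p, hmonic, -, hcoeff, haeval⟩ :=
    LinearMap.exists_monic_and_coeff_mem_pow_and_aeval_eq_zero_of_range_le_smul R
      (algebraMap R (Module.End R ↥P) c) (J * J') hrange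
  set t := p.natDegree with ht
  set e := p.eval c with he
  have hann : e * (y ^ (k - 1) * z ^ (k' - 1)) = 0 := by
    have hmem : y ^ (k - 1) * z ^ (k' - 1) ∈ P :=
      Ideal.mul_mem_mul (pow_mem_MId hk) (pow_mem_MId hk')
    have h0 : (Polynomial.aeval (algebraMap R (Module.End R ↥P) c) p)
        ⟨_, hmem⟩ = 0 := by rw [haeval]; rfl
    rw [Polynomial.aeval_algebraMap_apply_eq_algebraMap_eval,
      Module.algebraMap_end_apply] at h0
    have := congrArg Subtype.val h0
    simpa [mul_comm] using this
  have hecoset : CosetRel (J * J') c t e := by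
    unfold CosetRel
    have heval : e = ∑ i ∈ Finset.range (t + 1), p.coeff i * c ^ i :=
      Polynomial.eval_eq_sum_range c
    rw [heval, Finset.sum_range_succ, Polynomial.Monic.coeff_natDegree hmonic, one_mul,
      add_sub_cancel_right]
    refine sum_mem fun i hi => ?_
    rw [Finset.mem_range] at hi
    have h2 : c ^ i = c ^ (t - (t - i)) := by congr 1; omega
    rw [h2]
    exact mem_TId_of (Finset.mem_Icc.mpr ⟨by omega, by omega⟩) (hcoeff i)
  have hw1 : CosetRel (J * J') c 1 c := by
    unfold CosetRel; rw [pow_one, sub_self]; exact zero_mem _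
  have hew : CosetRel (J * J') c (t + 1) (e * c) := cosetRel_mul hecoset hw1
  set K := max k k' with hK
  have hKpos : 0 < K := lt_of_lt_of_le hk (le_max_left _ _)
  have hzero : (e * c) ^ K = 0 := by
    have e1 : e ^ K = e * e ^ (K - 1) := by
      rw [← pow_succ']; congr 1; omega
    have e2 : y ^ K = y ^ (k - 1) * y ^ (K - (k - 1)) := by
      rw [← pow_add]; congr 1; omega
    have e3 : z ^ K = z ^ (k' - 1) * z ^ (K - (k' - 1)) := by
      rw [← pow_add]; congr 1; omega
    have : (e * c) ^ K = (e * (y ^ (k - 1) * z ^ (k' - 1)))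
        * (e ^ (K - 1) * (y ^ (K - (k - 1)) * z ^ (K - (k' - 1)))) := by
      rw [mul_pow, hc, mul_pow, e1, e2, e3]; ring
    rw [this, hann, zero_mul]
  have hfin := cosetRel_pow hew K
  rw [hzero] at hfin
  unfold CosetRel at hfin
  rw [zero_sub, neg_mem_iff] at hfin
  exact mem_intCl_iff.mpr ⟨K * (t + 1), by positivity, hfin⟩

theorem pow_mem_intCl [IsNoetherianRing R] {J : Ideal R} {x : R} (hx : x ∈ intCl J) :
    ∀ d : ℕ, 0 < d → x ^ d ∈ intCl (J ^ d) := by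
  intro d hd
  induction d with
  | zero => omega
  | succ d ih =>
    rcases Nat.eq_zero_or_pos d with rfl | hd1
    · simpa using hx
    · have := mul_mem_intCl (ih hd1) hx
      rwa [← pow_succ, ← pow_succ] at this

end Aux

/-- Let `(R,m)` be Noetherian local, `I` a proper ideal, `x ∈ R` and
`n₀ ≥ 1`.  If `x ^ n₀ ∈ (m * I ^ n₀)‾`, then `x ^ n ∈ (m * I ^ n)‾` for all `n ≥ n₀`. -/
theorem spIntCl_asymptotic
    {R : Type*} [CommRing R] [IsNoetherianRing R] [IsLocalRing R]
    (I : Ideal R) (hI : I ≠ ⊤) (x : R) (n₀ : ℕ) (hn₀ : 1 ≤ n₀)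
    (h : x ^ n₀ ∈ intCl (IsLocalRing.maximalIdeal R * I ^ n₀)) :
    ∀ n ≥ n₀, x ^ n ∈ intCl (IsLocalRing.maximalIdeal R * I ^ n) := by
  intro n hn
  rcases eq_or_lt_of_le hn with rfl | hlt
  · exact h
  · have hxI : x ∈ intCl I :=
      mem_intCl_of_pow_mem (by omega) (intCl_mono Ideal.mul_le_right h)
    have hxd : x ^ (n - n₀) ∈ intCl (I ^ (n - n₀)) := pow_mem_intCl hxI _ (by omega)
    have hmul := mul_mem_intCl h hxd
    have harith : n₀ + (n - n₀) = n := by omega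
    have hideal : (IsLocalRing.maximalIdeal R * I ^ n₀) * I ^ (n - n₀)
        = IsLocalRing.maximalIdeal R * I ^ n := by
      rw [mul_assoc, ← pow_add, harith]
    rwa [← pow_add, harith, hideal] at hmul
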